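/- Let H and W be real separable Hilbert spaces with Hilbert bases (e_n)_{n∈ℕ} of H and (g_n)_{n∈ℕ} of W, let μ be a finite Borel measure on H with finite second moment, and let G : H → W be a strongly (Bochner) measurable map with ∫_H ‖G(x)‖_W² dμ(x) < ∞. Then for every ε > 0 there exist d, m ∈ ℕ and a continuous function f : ℝ^d → ℝ^m such that the DeepONet F = E_{W,m} ∘ f ∘ P_{H,d} satisfies ∫_H ‖G(x) − F(x)‖_W² dμ(x) < ε. -/

import Mathlib

open MeasureTheory
open scoped RealInnerProductSpace Topology BoundedContinuousFunction ENNReal NNReal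
open Filter

/-- The projection map `P_{H,d} : H → ℝ^d`, `x ↦ (⟪x,e₁⟫, …, ⟪x,e_d⟫)`,
associated with a Hilbert basis `e` of `H`. -/
noncomputable def projMap {H : Type*} [NormedAddCommGroup H] [InnerProductSpace ℝ H]
    (e : HilbertBasis ℕ ℝ H) (d : ℕ) (x : H) : EuclideanSpace ℝ (Fin d) :=
  WithLp.toLp 2 (fun i : Fin d => ⟪x, e i⟫)

/-- The extension map `E_{W,m} : ℝ^m → W`, `a ↦ ∑_{i=1}^m aᵢ gᵢ`,
associated with a Hilbert basis `g` of `W`. -/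
noncomputable def extMap {W : Type*} [NormedAddCommGroup W] [InnerProductSpace ℝ W]
    (g : HilbertBasis ℕ ℝ W) (m : ℕ) (a : EuclideanSpace ℝ (Fin m)) : W :=
  ∑ i : Fin m, a i • g i

set_option maxHeartbeats 2000000 in
/-- universal approximation of square-integrable operators by
DeepONets: any strongly measurable, square-integrable map between separable
Hilbert spaces can be `L²(μ)`-approximated by a DeepONet. -/
theorem stmt_4 (H W : Type*) [NormedAddCommGroup H] [InnerProductSpace ℝ H]
    [NormedAddCommGroup W] [InnerProductSpace ℝ W]
    [MeasurableSpace H] [BorelSpace H]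
    (e : HilbertBasis ℕ ℝ H) (g : HilbertBasis ℕ ℝ W)
    (μ : Measure H) [IsFiniteMeasure μ]
    (hμ : Integrable (fun x : H => ‖x‖ ^ 2) μ)
    (G : H → W) (hGmeas : StronglyMeasurable G)
    (hG2 : Integrable (fun x : H => ‖G x‖ ^ 2) μ)
    (ε : ℝ) (hε : 0 < ε) :
    ∃ (d m : ℕ) (f : EuclideanSpace ℝ (Fin d) → EuclideanSpace ℝ (Fin m)),
      Continuous f ∧
      Integrable (fun x : H => ‖G x - extMap g m (f (projMap e d x))‖ ^ 2) μ ∧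
      ∫ x : H, ‖G x - extMap g m (f (projMap e d x))‖ ^ 2 ∂μ < ε := by
  classical
  have hGm : MemLp G 2 μ :=
    (memLp_two_iff_integrable_sq_norm hGmeas.aestronglyMeasurable).2 hG2
  set φ : ℕ → H → ℝ := fun i x => ⟪g i, G x⟫ with hφdef
  have hφmeas : ∀ i, StronglyMeasurable (φ i) := fun i =>
    (innerSL ℝ (g i)).continuous.comp_stronglyMeasurable hGmeas
  have hφmem : ∀ i, MemLp (φ i) 2 μ := fun i => hGm.const_inner (g i)
  -- norm of an orthonormal finite combination
  have hnorm_sum : ∀ (n : ℕ) (l : Fin n → ℝ),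
      ‖∑ i : Fin n, l i • g (i : ℕ)‖ ^ 2 = ∑ i : Fin n, l i ^ 2 := by
    intro n l
    have hv : Orthonormal ℝ (fun i : Fin n => g (i : ℕ)) :=
      g.orthonormal.comp _ Fin.val_injective
    rw [← real_inner_self_eq_norm_sq]
    simpa [starRingEnd_apply, pow_two] using hv.inner_sum l l Finset.univ
  -- Bessel
  have hbessel : ∀ (n : ℕ) (x : H), ∑ i : Fin n, φ i x ^ 2 ≤ ‖G x‖ ^ 2 := by
    intro n x
    have h := g.orthonormal.sum_inner_products_le (x := G x) (s := Finset.range n)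
    have h2 : ∑ i ∈ Finset.range n, ‖⟪g i, G x⟫‖ ^ 2 = ∑ i : Fin n, φ i x ^ 2 := by
      rw [← Fin.sum_univ_eq_sum_range (fun i => ‖⟪g i, G x⟫‖ ^ 2) n]
      exact Finset.sum_congr rfl fun i _ => by simp [hφdef, Real.norm_eq_abs, sq_abs]
    rw [← h2]; exact h
  -- partial sums
  set S : ℕ → H → W := fun n x => ∑ i : Fin n, φ i x • g (i : ℕ) with hSdef
  have hSmeas : ∀ n, StronglyMeasurable (S n) := fun n =>
    Finset.stronglyMeasurable_fun_sum _ fun i _ => (hφmeas i).smul_const (g (i : ℕ))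
  have hSnorm : ∀ n x, ‖S n x‖ ≤ ‖G x‖ := by
    intro n x
    have h1 : ‖S n x‖ ^ 2 ≤ ‖G x‖ ^ 2 := by
      rw [hSdef]
      simpa [hnorm_sum n fun i => φ i x] using hbessel n x
    calc ‖S n x‖ = Real.sqrt (‖S n x‖ ^ 2) := (Real.sqrt_sq (norm_nonneg _)).symm
      _ ≤ Real.sqrt (‖G x‖ ^ 2) := Real.sqrt_le_sqrt h1
      _ = ‖G x‖ := Real.sqrt_sq (norm_nonneg _)
  have hSmem : ∀ n, MemLp (S n) 2 μ := by
    intro n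
    refine MemLp.of_le_mul (c := 1) hGm (hSmeas n).aestronglyMeasurable ?_
    exact Eventually.of_forall fun x => by simpa using hSnorm n x
  -- Step A : choose m
  have hStend : Tendsto (fun n => ∫ x, ‖G x - S n x‖ ^ 2 ∂μ) atTop (𝓝 0) := by
    have key : Tendsto (fun n => ∫ x, ‖G x - S n x‖ ^ 2 ∂μ) atTop
        (𝓝 (∫ _x, (0 : ℝ) ∂μ)) := by
      apply tendsto_integral_of_dominated_convergence (fun x => 4 * ‖G x‖ ^ 2)
      · exact fun n => ((hGmeas.sub (hSmeas n)).norm.pow 2).aestronglyMeasurable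
      · exact hG2.const_mul 4
      · intro n
        refine Eventually.of_forall fun x => ?_
        rw [Real.norm_of_nonneg (by positivity)]
        have h1 : ‖G x - S n x‖ ≤ 2 * ‖G x‖ :=
          (norm_sub_le _ _).trans (by linarith [hSnorm n x])
        nlinarith [norm_nonneg (G x - S n x), norm_nonneg (G x)]
      · refine Eventually.of_forall fun x => ?_
        have hx : Tendsto (fun n => S n x) atTop (𝓝 (G x)) := by
          have h := (g.hasSum_repr (G x)).tendsto_sum_nat
          have heq : ∀ n, S n x = ∑ i ∈ Finset.range n, g.repr (G x) i • g i := by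
            intro n
            rw [hSdef]
            rw [← Fin.sum_univ_eq_sum_range (fun i => g.repr (G x) i • g i) n]
            exact Finset.sum_congr rfl fun i _ => by rw [g.repr_apply_apply]
          simpa [heq] using h
        have h2 := ((tendsto_const_nhds (x := G x)).sub hx).norm.pow 2
        simpa using h2
    simpa using key
  obtain ⟨m, hm⟩ := (hStend.eventually_lt_const (by positivity : (0:ℝ) < ε / 8)).exists
  set δ : ℝ := ε / (32 * ((m : ℝ) + 1)) with hδdef
  have hδ : 0 < δ := by positivity
  -- Step B : bounded continuous approximations of the coordinates
  have key : ∀ i : Fin m, ∃ ψ : H →ᵇ ℝ,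
      (∫ x, (φ i x - ψ x) ^ 2 ∂μ) ≤ δ ∧ MemLp (fun x => ψ x) 2 μ := by
    intro i
    have h2 : MemLp (φ (i : ℕ)) (ENNReal.ofReal 2) μ := by
      have : (ENNReal.ofReal 2) = (2 : ℝ≥0∞) := by
        rw [ENNReal.ofReal_ofNat]
      rw [this]; exact hφmem (i : ℕ)
    obtain ⟨ψ, h1, hmem⟩ := h2.exists_boundedContinuous_integral_rpow_sub_le two_pos hδ
    refine ⟨ψ, ?_, ?_⟩
    · have heq : ∀ x, ‖φ (i : ℕ) x - ψ x‖ ^ (2 : ℝ) = (φ (i : ℕ) x - ψ x) ^ 2 := fun x => by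
        rw [show (2:ℝ) = ((2:ℕ):ℝ) by norm_num, Real.rpow_natCast]
        simp [Real.norm_eq_abs, sq_abs]
      simpa [heq] using h1
    · have : (ENNReal.ofReal 2) = (2 : ℝ≥0∞) := by
        rw [ENNReal.ofReal_ofNat]
      rw [this] at hmem
      exact hmem
  choose ψ hψint hψmem using key
  -- finite-dimensional projections on H
  set Q : ℕ → H → H := fun k x => ∑ j : Fin k, ⟪x, e (j : ℕ)⟫ • e (j : ℕ) with hQdef
  have hQcont : ∀ k, Continuous (Q k) := fun k =>
    continuous_finset_sum _ fun j _ =>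
      (continuous_id.inner continuous_const).smul continuous_const
  have hQtend : ∀ x, Tendsto (fun k => Q k x) atTop (𝓝 x) := by
    intro x
    have h := (e.hasSum_repr x).tendsto_sum_nat
    have heq : ∀ k, Q k x = ∑ j ∈ Finset.range k, e.repr x j • e j := by
      intro k
      rw [hQdef, ← Fin.sum_univ_eq_sum_range (fun j => e.repr x j • e j) k]
      exact Finset.sum_congr rfl fun j _ => by
        rw [e.repr_apply_apply, real_inner_comm]
    simpa [heq] using h
  -- Step C : choose d
  have hCtend : ∀ i : Fin m,
      Tendsto (fun k => ∫ x, (ψ i x - ψ i (Q k x)) ^ 2 ∂μ) atTop (𝓝 0) := by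
    intro i
    have key2 : Tendsto (fun k => ∫ x, (ψ i x - ψ i (Q k x)) ^ 2 ∂μ) atTop
        (𝓝 (∫ _x, (0 : ℝ) ∂μ)) := by
      apply tendsto_integral_of_dominated_convergence (fun _ => (2 * ‖ψ i‖) ^ 2)
      · exact fun k => (((ψ i).continuous.sub
          ((ψ i).continuous.comp (hQcont k))).pow 2).aestronglyMeasurable
      · exact integrable_const _
      · intro k
        refine Eventually.of_forall fun x => ?_
        rw [Real.norm_of_nonneg (sq_nonneg _)]
        have ha := (ψ i).norm_coe_le_norm x
        have hb := (ψ i).norm_coe_le_norm (Q k x)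
        rw [Real.norm_eq_abs] at ha hb
        nlinarith [abs_nonneg (ψ i x), abs_nonneg (ψ i (Q k x)),
          abs_le.1 ha, abs_le.1 hb]
      · refine Eventually.of_forall fun x => ?_
        have hx : Tendsto (fun k => ψ i (Q k x)) atTop (𝓝 (ψ i x)) :=
          ((ψ i).continuous.tendsto x).comp (hQtend x)
        have h2 := ((tendsto_const_nhds (x := ψ i x)).sub hx).pow 2
        simpa using h2
    simpa using key2
  have hd : ∀ i : Fin m, ∃ D, ∀ k ≥ D, ∫ x, (ψ i x - ψ i (Q k x)) ^ 2 ∂μ < δ := fun i =>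
    eventually_atTop.1 ((hCtend i).eventually_lt_const hδ)
  choose D hD using hd
  set d : ℕ := Finset.univ.sup D with hddef
  have hC : ∀ i : Fin m, ∫ x, (ψ i x - ψ i (Q d x)) ^ 2 ∂μ < δ := fun i =>
    hD i d (Finset.le_sup (Finset.mem_univ i))
  -- key facts about the approximant
  have hfeval : ∀ x : H,
      extMap g m ((WithLp.equiv 2 (Fin m → ℝ)).symm
        (fun i => ψ i (∑ j : Fin d, (projMap e d x) j • e (j : ℕ)))) =
      ∑ i : Fin m, ψ i (Q d x) • g (i : ℕ) := by
    intro x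
    rfl
  have hFmem : MemLp (fun x => ∑ i : Fin m, ψ i (Q d x) • g (i : ℕ)) 2 μ := by
    refine memLp_finset_sum _ fun i _ => ?_
    have hsm : StronglyMeasurable fun x => ψ i (Q d x) :=
      ((ψ i).continuous.comp (hQcont d)).stronglyMeasurable
    refine MemLp.of_bound (μ := μ) (p := 2)
      (hsm.smul_const (g (i : ℕ))).aestronglyMeasurable (‖ψ i‖) ?_
    refine Eventually.of_forall fun x => ?_
    rw [norm_smul, g.orthonormal.1 (i : ℕ), mul_one]
    exact (ψ i).norm_coe_le_norm (Q d x)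
  have hGFmem : MemLp (fun x => G x - ∑ i : Fin m, ψ i (Q d x) • g (i : ℕ)) 2 μ :=
    hGm.sub hFmem
  have IF : Integrable
      (fun x => ‖G x - ∑ i : Fin m, ψ i (Q d x) • g (i : ℕ)‖ ^ 2) μ :=
    (memLp_two_iff_integrable_sq_norm hGFmem.1).1 hGFmem
  have IT : Integrable (fun x => ‖G x - S m x‖ ^ 2) μ := by
    have h := hGm.sub (hSmem m)
    exact (memLp_two_iff_integrable_sq_norm h.1).1 h
  have IB : ∀ i : Fin m, Integrable (fun x => (φ i x - ψ i x) ^ 2) μ := fun i =>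
    ((hφmem (i : ℕ)).sub (hψmem i)).integrable_sq
  have IC : ∀ i : Fin m, Integrable (fun x => (ψ i x - ψ i (Q d x)) ^ 2) μ := by
    intro i
    have hc : Continuous fun x => (ψ i x - ψ i (Q d x)) ^ 2 :=
      ((ψ i).continuous.sub ((ψ i).continuous.comp (hQcont d))).pow 2
    refine memLp_one_iff_integrable.1 (MemLp.of_bound hc.aestronglyMeasurable
      ((2 * ‖ψ i‖) ^ 2) (Eventually.of_forall fun x => ?_))
    rw [Real.norm_of_nonneg (sq_nonneg _)]
    have ha := (ψ i).norm_coe_le_norm x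
    have hb := (ψ i).norm_coe_le_norm (Q d x)
    rw [Real.norm_eq_abs] at ha hb
    nlinarith [abs_le.1 ha, abs_le.1 hb]
  have IBC : ∀ i : Fin m, Integrable
      (fun x => 4 * (φ i x - ψ i x) ^ 2 + 4 * (ψ i x - ψ i (Q d x)) ^ 2) μ :=
    fun i => ((IB i).const_mul 4).add ((IC i).const_mul 4)
  have ITC : Integrable (fun x => 2 * ‖G x - S m x‖ ^ 2) μ := IT.const_mul 2
  have IRHS : Integrable (fun x => 2 * ‖G x - S m x‖ ^ 2 +
      ∑ i : Fin m, (4 * (φ i x - ψ i x) ^ 2 + 4 * (ψ i x - ψ i (Q d x)) ^ 2)) μ := by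
    exact ITC.add (integrable_finset_sum _ fun i _ => IBC i)
  -- pointwise estimate
  have hpt : ∀ x : H, ‖G x - ∑ i : Fin m, ψ i (Q d x) • g (i : ℕ)‖ ^ 2 ≤
      2 * ‖G x - S m x‖ ^ 2 +
      ∑ i : Fin m, (4 * (φ i x - ψ i x) ^ 2 + 4 * (ψ i x - ψ i (Q d x)) ^ 2) := by
    intro x
    set Fx : W := ∑ i : Fin m, ψ i (Q d x) • g (i : ℕ) with hFx
    have hdecomp : G x - Fx = (G x - S m x) + (S m x - Fx) := by abel
    have h1 : ‖G x - Fx‖ ≤ ‖G x - S m x‖ + ‖S m x - Fx‖ := by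
      rw [hdecomp]; exact norm_add_le _ _
    have h2 : ‖S m x - Fx‖ ^ 2 = ∑ i : Fin m, (φ i x - ψ i (Q d x)) ^ 2 := by
      have heq : S m x - Fx = ∑ i : Fin m, (φ i x - ψ i (Q d x)) • g (i : ℕ) := by
        rw [hSdef, hFx, ← Finset.sum_sub_distrib]
        exact Finset.sum_congr rfl fun i _ => (sub_smul _ _ _).symm
      rw [heq, hnorm_sum m fun i => φ i x - ψ i (Q d x)]
    have h3 : ∑ i : Fin m, (φ i x - ψ i (Q d x)) ^ 2 * 2 ≤
        ∑ i : Fin m, (4 * (φ i x - ψ i x) ^ 2 + 4 * (ψ i x - ψ i (Q d x)) ^ 2) := by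
      refine Finset.sum_le_sum fun i _ => ?_
      nlinarith [sq_nonneg ((φ i x - ψ i x) - (ψ i x - ψ i (Q d x)))]
    have h4 : ‖G x - Fx‖ ^ 2 ≤ 2 * ‖G x - S m x‖ ^ 2 + 2 * ‖S m x - Fx‖ ^ 2 := by
      nlinarith [norm_nonneg (G x - Fx), norm_nonneg (G x - S m x),
        norm_nonneg (S m x - Fx), sq_nonneg (‖G x - S m x‖ - ‖S m x - Fx‖)]
    have h5 : 2 * ‖S m x - Fx‖ ^ 2 =
        ∑ i : Fin m, (φ i x - ψ i (Q d x)) ^ 2 * 2 := by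
      rw [h2, Finset.mul_sum]
      exact Finset.sum_congr rfl fun i _ => mul_comm _ _
    linarith [h4, h5 ▸ h3]
  have hineq : ∫ x, ‖G x - ∑ i : Fin m, ψ i (Q d x) • g (i : ℕ)‖ ^ 2 ∂μ ≤
      ∫ x, (2 * ‖G x - S m x‖ ^ 2 +
        ∑ i : Fin m, (4 * (φ i x - ψ i x) ^ 2 + 4 * (ψ i x - ψ i (Q d x)) ^ 2)) ∂μ :=
    integral_mono IF IRHS hpt
  have hsplit : ∫ x, (2 * ‖G x - S m x‖ ^ 2 +
        ∑ i : Fin m, (4 * (φ i x - ψ i x) ^ 2 + 4 * (ψ i x - ψ i (Q d x)) ^ 2)) ∂μ =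
      2 * (∫ x, ‖G x - S m x‖ ^ 2 ∂μ) +
      ∑ i : Fin m, (4 * (∫ x, (φ i x - ψ i x) ^ 2 ∂μ) +
        4 * (∫ x, (ψ i x - ψ i (Q d x)) ^ 2 ∂μ)) := by
    rw [integral_add ITC (integrable_finset_sum _ fun i _ => IBC i), integral_const_mul _ _,
      integral_finset_sum _ fun i _ => IBC i]
    congr 1
    refine Finset.sum_congr rfl fun i _ => ?_
    rw [integral_add ((IB i).const_mul 4) ((IC i).const_mul 4),
      integral_const_mul _ _, integral_const_mul _ _]
  have hsum_le : ∑ i : Fin m, (4 * (∫ x, (φ i x - ψ i x) ^ 2 ∂μ) +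
        4 * (∫ x, (ψ i x - ψ i (Q d x)) ^ 2 ∂μ)) ≤ (m : ℝ) * (8 * δ) := by
    calc ∑ i : Fin m, (4 * (∫ x, (φ i x - ψ i x) ^ 2 ∂μ) +
          4 * (∫ x, (ψ i x - ψ i (Q d x)) ^ 2 ∂μ))
        ≤ ∑ _i : Fin m, 8 * δ := by
          refine Finset.sum_le_sum fun i _ => ?_
          have h1 := hψint i
          have h2 := hC i
          linarith
      _ = (m : ℝ) * (8 * δ) := by
          rw [Finset.sum_const, Finset.card_univ, Fintype.card_fin, nsmul_eq_mul]
  have hmδ : (m : ℝ) * (8 * δ) ≤ ε / 4 := by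
    have hc : 32 * ((m : ℝ) + 1) * δ = ε := by
      rw [hδdef]; field_simp
    nlinarith [hδ.le, Nat.cast_nonneg (α := ℝ) m]
  have Ilt : ∫ x, ‖G x - ∑ i : Fin m, ψ i (Q d x) • g (i : ℕ)‖ ^ 2 ∂μ < ε := by
    calc ∫ x, ‖G x - ∑ i : Fin m, ψ i (Q d x) • g (i : ℕ)‖ ^ 2 ∂μ
        ≤ 2 * (∫ x, ‖G x - S m x‖ ^ 2 ∂μ) +
          ∑ i : Fin m, (4 * (∫ x, (φ i x - ψ i x) ^ 2 ∂μ) +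
            4 * (∫ x, (ψ i x - ψ i (Q d x)) ^ 2 ∂μ)) := by
          rw [← hsplit]; exact hineq
      _ < 2 * (ε / 8) + (m : ℝ) * (8 * δ) := by
          have := hsum_le
          linarith [hm]
      _ ≤ 2 * (ε / 8) + ε / 4 := by linarith
      _ < ε := by linarith
  refine ⟨d, m, fun a => (WithLp.equiv 2 (Fin m → ℝ)).symm
      (fun i => ψ i (∑ j : Fin d, a j • e (j : ℕ))), ?_, ?_, ?_⟩
  · refine Continuous.comp (PiLp.continuous_toLp 2 (fun _ : Fin m => ℝ)) ?_
    refine continuous_pi fun i => (ψ i).continuous.comp ?_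
    exact continuous_finset_sum _ fun j _ =>
      ((EuclideanSpace.proj j).continuous).smul continuous_const
  · simpa only [hfeval] using IF
  · simpa only [hfeval] using Ilt
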